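/- Let g be a compact simple Lie algebra of type A_n, t a maximal abelian subalgebra, Π = {α_1,…,α_n} the fundamental roots of Δ(g_C,t_C), and K_j ∈ t_C defined by α_i(K_j) = δ_{ij}. Then for every i with 1 ≤ i ≤ n, the inner automorphism τ_{K_i} = Ad(exp π√−1K_i) is conjugate within the group Int(g) of inner automorphisms to τ_{K_{n+1−i}}. -/

import Mathlib

/-!
Common framework: we model the complexification `gC` of a compact Lie algebra `g` as a
complex Lie algebra, the compact real form `g` and the maximal abelian subalgebra `t`
as real Lie subalgebras of `gC`, roots of `(gC, tC)` as complex-linear functionals on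
`gC` (only their restriction to `tC`, the complex span of `t`, matters), and the
inner automorphisms `Ad(exp X) = exp (ad X)` through an abstract family `expAd`
characterized by its action on eigenvectors of `ad X` (which determines it on the
compact form, where every `ad X` is semisimple).
-/

open Complex

namespace Paper

variable (gC : Type) [LieRing gC] [LieAlgebra ℂ gC] [LieAlgebra ℝ gC]
  [IsScalarTower ℝ ℂ gC] [FiniteDimensional ℂ gC]

/-- Composition group structure on the Lie algebra automorphisms of `gC`. -/
noncomputable instance : Group (gC ≃ₗ⁅ℂ⁆ gC) where
  mul f g := g.trans f
  one := LieEquiv.refl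
  inv f := f.symm
  mul_assoc f g h := rfl
  one_mul f := rfl
  mul_one f := rfl
  inv_mul_cancel f := by
    ext x
    exact f.symm_apply_apply x

/-- The complex span `t_ℂ` of a real subalgebra `t` of `gC`. -/
def cspan (t : LieSubalgebra ℝ gC) : Submodule ℂ gC := Submodule.span ℂ (t : Set gC)

/-- The root space of the functional `a` with respect to `t_ℂ`. -/
def rootSpace (t : LieSubalgebra ℝ gC) (a : Module.Dual ℂ gC) : Set gC :=
  {X : gC | ∀ H ∈ cspan gC t, ⁅H, X⁆ = a H • X}

/-- `a` is a root of `(gC, t_ℂ)`. -/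
def IsRoot (t : LieSubalgebra ℝ gC) (a : Module.Dual ℂ gC) : Prop :=
  (∃ H ∈ cspan gC t, a H ≠ 0) ∧ ∃ X : gC, X ≠ 0 ∧ X ∈ rootSpace gC t a

/-- `g` is a compact real form of `gC`: `gC = g ⊕ √-1 g` and the Killing form of `g`
is negative definite. -/
structure IsCompactForm (g : LieSubalgebra ℝ gC) : Prop where
  spans : ∀ z : gC, ∃ x ∈ g, ∃ y ∈ g, z = x + Complex.I • y
  inj : ∀ x : gC, x ∈ g → Complex.I • x ∈ g → x = 0
  negdef : ∀ x : ↥g, x ≠ 0 → killingForm ℝ ↥g x x < 0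

/-- `t` is a maximal abelian subalgebra of `g`. -/
structure IsMaxAbelian (g t : LieSubalgebra ℝ gC) : Prop where
  le : t ≤ g
  abelian : ∀ x ∈ t, ∀ y ∈ t, ⁅x, y⁆ = (0 : gC)
  max : ∀ t' : LieSubalgebra ℝ gC, t' ≤ g →
    (∀ x ∈ t', ∀ y ∈ t', ⁅x, y⁆ = (0 : gC)) → t ≤ t' → t' = t

/-- `α 1, …, α n` is a system of fundamental (simple) roots of `Δ(gC, t_ℂ)` and
`K 1, …, K n` is the dual basis of `t_ℂ`, i.e. `α i (K j) = δ_{ij}`. -/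
structure IsSimpleSystem (t : LieSubalgebra ℝ gC) (n : ℕ) (α : ℕ → Module.Dual ℂ gC)
    (K : ℕ → gC) : Prop where
  isRoot : ∀ i ∈ Finset.Icc 1 n, IsRoot gC t (α i)
  decomp : ∀ b : Module.Dual ℂ gC, IsRoot gC t b →
    (∃ k : ℕ → ℕ, ∀ H ∈ cspan gC t, b H = ∑ j ∈ Finset.Icc 1 n, (k j : ℂ) * α j H) ∨
    (∃ k : ℕ → ℕ, ∀ H ∈ cspan gC t, b H = -∑ j ∈ Finset.Icc 1 n, (k j : ℂ) * α j H)
  K_mem : ∀ j ∈ Finset.Icc 1 n, K j ∈ cspan gC t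
  K_dual : ∀ i ∈ Finset.Icc 1 n, ∀ j ∈ Finset.Icc 1 n, α i (K j) = if i = j then 1 else 0

/-- `δ = Σ m_j α_j` is the highest root of `Δ(gC, t_ℂ)`. -/
structure IsHighestRoot (t : LieSubalgebra ℝ gC) (n : ℕ) (α : ℕ → Module.Dual ℂ gC)
    (δ : Module.Dual ℂ gC) (m : ℕ → ℕ) : Prop where
  isRoot : IsRoot gC t δ
  decomp : ∀ H ∈ cspan gC t, δ H = ∑ j ∈ Finset.Icc 1 n, (m j : ℂ) * α j H
  highest : ∀ (b : Module.Dual ℂ gC) (k : ℕ → ℕ), IsRoot gC t b →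
    (∀ H ∈ cspan gC t, b H = ∑ j ∈ Finset.Icc 1 n, (k j : ℂ) * α j H) →
    ∀ j ∈ Finset.Icc 1 n, k j ≤ m j

/-- `expAd X` is the inner automorphism `Ad(exp X) = exp (ad X)` of `gC`:
it multiplies each eigenvector of `ad X` with eigenvalue `c` by `e^c`, it is additive on
commuting arguments, and conjugation by any automorphism transports it naturally. -/
structure IsExpAd (expAd : gC → (gC ≃ₗ⁅ℂ⁆ gC)) : Prop where
  eig : ∀ (X Y : gC) (c : ℂ), ⁅X, Y⁆ = c • Y → expAd X Y = Complex.exp c • Y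
  add : ∀ X Y : gC, ⁅X, Y⁆ = 0 → expAd (X + Y) = expAd X * expAd Y
  conj : ∀ (f : gC ≃ₗ⁅ℂ⁆ gC) (X : gC), f * expAd X * f⁻¹ = expAd (f X)

/-- The group `Int(s)` of inner automorphisms generated by `exp (ad X)`, `X ∈ s`. -/
noncomputable def Inn (expAd : gC → (gC ≃ₗ⁅ℂ⁆ gC)) (s : LieSubalgebra ℝ gC) :
    Subgroup (gC ≃ₗ⁅ℂ⁆ gC) :=
  Subgroup.closure (expAd '' (s : Set gC))

/-- The automorphism `τ_H = Ad(exp π √-1 H)`. -/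
noncomputable def tau (expAd : gC → (gC ≃ₗ⁅ℂ⁆ gC)) (H : gC) : gC ≃ₗ⁅ℂ⁆ gC :=
  expAd (((Real.pi : ℂ) * Complex.I) • H)

/-- The automorphism `Ad(exp (π/2) √-1 H)`. -/
noncomputable def sigmaAd (expAd : gC → (gC ≃ₗ⁅ℂ⁆ gC)) (H : gC) : gC ≃ₗ⁅ℂ⁆ gC :=
  expAd ((((Real.pi / 2 : ℝ) : ℂ) * Complex.I) • H)

/-- The fixed point set `g^f` of an automorphism `f` inside the real form `g`. -/
def FixIn (g : LieSubalgebra ℝ gC) (f : gC ≃ₗ⁅ℂ⁆ gC) : Set gC :=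
  {x : gC | x ∈ g ∧ f x = x}

/-- Root space decomposition: `gC` is spanned by `t_ℂ` together with the root spaces. -/
def SpansByRoots (t : LieSubalgebra ℝ gC) : Prop :=
  Submodule.span ℂ ((cspan gC t : Set gC) ∪
    {X : gC | ∃ a : Module.Dual ℂ gC, IsRoot gC t a ∧ X ∈ rootSpace gC t a}) = ⊤

/-! ### Auxiliary machinery -/

section Aux

variable {gC : Type} [LieRing gC] [LieAlgebra ℂ gC] [LieAlgebra ℝ gC]
  [IsScalarTower ℝ ℂ gC] [FiniteDimensional ℂ gC]

lemma rsmul (r : ℝ) (x : gC) : (r : ℂ) • x = r • x := by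
  rw [← algebraMap_smul ℂ r x]; norm_num

lemma eqv_add (ν : gC ≃ₗ⁅ℂ⁆ gC) (x y : gC) : ν (x + y) = ν x + ν y :=
  ν.toLinearEquiv.map_add x y

lemma eqv_smul (ν : gC ≃ₗ⁅ℂ⁆ gC) (c : ℂ) (x : gC) : ν (c • x) = c • ν x :=
  ν.toLinearEquiv.map_smul c x

lemma eqv_sub (ν : gC ≃ₗ⁅ℂ⁆ gC) (x y : gC) : ν (x - y) = ν x - ν y :=
  ν.toLinearEquiv.map_sub x y

lemma eqv_neg (ν : gC ≃ₗ⁅ℂ⁆ gC) (x : gC) : ν (-x) = -(ν x) :=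
  ν.toLinearEquiv.map_neg x

lemma eqv_zero (ν : gC ≃ₗ⁅ℂ⁆ gC) : ν (0 : gC) = 0 :=
  ν.toLinearEquiv.map_zero

lemma eqv_ne_zero (ν : gC ≃ₗ⁅ℂ⁆ gC) {x : gC} (hx : x ≠ 0) : ν x ≠ 0 := by
  intro h0
  exact hx (ν.toLinearEquiv.map_eq_zero_iff.mp h0)

variable {g t : LieSubalgebra ℝ gC}

lemma mem_cspan {x : gC} (hx : x ∈ t) : x ∈ cspan gC t :=
  Submodule.subset_span hx

lemma decomp_zero (hg : IsCompactForm gC g) {x y : gC} (hx : x ∈ g) (hy : y ∈ g)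
    (h : x + Complex.I • y = 0) : x = 0 ∧ y = 0 := by
  have hy0 : y = 0 := by
    refine hg.inj y hy ?_
    have h1 : Complex.I • y = -x := eq_neg_of_add_eq_zero_right h
    rw [h1]; exact neg_mem hx
  refine ⟨?_, hy0⟩
  simpa [hy0] using h

lemma decomp_unique (hg : IsCompactForm gC g) {x y x' y' : gC}
    (hx : x ∈ g) (hy : y ∈ g) (hx' : x' ∈ g) (hy' : y' ∈ g)
    (h : x + Complex.I • y = x' + Complex.I • y') : x = x' ∧ y = y' := by
  have h0 : (x - x') + Complex.I • (y - y') = 0 := by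
    rw [smul_sub]
    rw [show x - x' + (Complex.I • y - Complex.I • y')
        = (x + Complex.I • y) - (x' + Complex.I • y') by abel, h, sub_self]
  obtain ⟨h1, h2⟩ := decomp_zero hg (sub_mem hx hx') (sub_mem hy hy') h0
  exact ⟨sub_eq_zero.mp h1, sub_eq_zero.mp h2⟩

lemma dual_vanish {a : Module.Dual ℂ gC} (h : ∀ x ∈ t, a x = 0) {H : gC}
    (hH : H ∈ cspan gC t) : a H = 0 := by
  have hle : cspan gC t ≤ LinearMap.ker a :=
    Submodule.span_le.mpr (fun x hx => LinearMap.mem_ker.mpr (h x hx))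
  simpa using hle hH

/-- The linear map `H ↦ ⁅H, Y⁆ - a H • Y`. -/
private def lieFun (Y : gC) (a : Module.Dual ℂ gC) : gC →ₗ[ℂ] gC where
  toFun H := ⁅H, Y⁆ - a H • Y
  map_add' u w := by
    simp only [add_lie, map_add, add_smul]
    abel
  map_smul' c u := by
    simp only [smul_lie, map_smul, smul_eq_mul, mul_smul, RingHom.id_apply, smul_sub]

lemma mem_rootSpace_of_t {Y : gC} {a : Module.Dual ℂ gC}
    (h : ∀ x ∈ t, ⁅x, Y⁆ = a x • Y) : Y ∈ rootSpace gC t a := by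
  intro H hH
  have hle : cspan gC t ≤ LinearMap.ker (lieFun Y a) :=
    Submodule.span_le.mpr (fun x hx => by
      simp only [SetLike.mem_coe, LinearMap.mem_ker, lieFun, LinearMap.coe_mk, AddHom.coe_mk,
        h x hx, sub_self])
  have hk := hle hH
  simp only [LinearMap.mem_ker, lieFun, LinearMap.coe_mk, AddHom.coe_mk, sub_eq_zero] at hk
  exact hk

lemma cspan_abelian (ht : IsMaxAbelian gC g t) :
    ∀ H ∈ cspan gC t, ∀ H' ∈ cspan gC t, ⁅H, H'⁆ = (0 : gC) := by
  have step1 : ∀ z ∈ t, ∀ H ∈ cspan gC t, ⁅z, H⁆ = (0 : gC) := by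
    intro z hz H hH
    have hle : cspan gC t ≤ LinearMap.ker (LieAlgebra.ad ℂ gC z) :=
      Submodule.span_le.mpr (fun w hw => by
        simp [LinearMap.mem_ker, LieAlgebra.ad_apply, ht.abelian z hz w hw])
    simpa [LieAlgebra.ad_apply] using hle hH
  intro H hH H' hH'
  have hle : cspan gC t ≤ LinearMap.ker (LieAlgebra.ad ℂ gC H') :=
    Submodule.span_le.mpr (fun z hz => by
      have h1 : ⁅z, H'⁆ = (0 : gC) := step1 z hz H' hH'
      have h2 : ⁅H', z⁆ = (0 : gC) := by rw [← lie_skew, h1, neg_zero]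
      simp [LinearMap.mem_ker, LieAlgebra.ad_apply, h2])
  have h3 : ⁅H', H⁆ = (0 : gC) := by simpa [LieAlgebra.ad_apply] using hle hH
  rw [← lie_skew, h3, neg_zero]

lemma killing_nonpos (hg : IsCompactForm gC g) (z : ↥g) : killingForm ℝ ↥g z z ≤ 0 := by
  rcases eq_or_ne z 0 with h | h
  · simp [h]
  · exact (hg.negdef z h).le

lemma root_components (hg : IsCompactForm gC g) (ht : IsMaxAbelian gC g t)
    {a : Module.Dual ℂ gC} {x y : gC} (hx : x ∈ g) (hy : y ∈ g)
    (hmem : x + Complex.I • y ∈ rootSpace gC t a) (hne : x + Complex.I • y ≠ 0) :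
    ∀ h ∈ t, (a h).re = 0 ∧ ⁅h, x⁆ = (-(a h).im) • y ∧ ⁅h, y⁆ = (a h).im • x := by
  intro h hh
  have hhg : h ∈ g := ht.le hh
  have hb := hmem h (mem_cspan hh)
  have key : ∀ cc : ℂ, ∀ u w : gC, cc • (u + Complex.I • w)
      = (cc.re • u - cc.im • w) + Complex.I • (cc.im • u + cc.re • w) := by
    intro cc u w
    rw [← rsmul cc.re u, ← rsmul cc.im w, ← rsmul cc.im u, ← rsmul cc.re w]
    conv_lhs => rw [show cc = (cc.re : ℂ) + (cc.im : ℂ) * Complex.I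
      from (Complex.re_add_im cc).symm]
    match_scalars <;> simp [Complex.ext_iff] <;> ring
  have expand : ⁅h, x⁆ + Complex.I • ⁅h, y⁆ =
      ((a h).re • x - (a h).im • y) + Complex.I • ((a h).im • x + (a h).re • y) := by
    have e0 : ⁅h, x + Complex.I • y⁆ = ⁅h, x⁆ + Complex.I • ⁅h, y⁆ := by
      rw [lie_add, lie_smul]
    rw [← e0, hb, key]
  obtain ⟨E1, E2⟩ := decomp_unique hg (g.lie_mem hhg hx) (g.lie_mem hhg hy)
    (sub_mem (g.smul_mem _ hx) (g.smul_mem _ hy))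
    (add_mem (g.smul_mem _ hx) (g.smul_mem _ hy)) expand
  have hre : (a h).re = 0 := by
    set xh : ↥g := ⟨x, hx⟩ with hxh
    set yh : ↥g := ⟨y, hy⟩ with hyh
    set hh' : ↥g := ⟨h, hhg⟩ with hhh
    have kE1 : ⁅hh', xh⁆ = (a h).re • xh - (a h).im • yh := by
      ext; push_cast; exact E1
    have kE2 : ⁅hh', yh⁆ = (a h).im • xh + (a h).re • yh := by
      ext; push_cast; exact E2
    have k1 : killingForm ℝ ↥g ⁅hh', xh⁆ xh = 0 := by
      rw [LieModule.traceForm_apply_lie_apply]; simp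
    have k2 : killingForm ℝ ↥g ⁅hh', yh⁆ yh = 0 := by
      rw [LieModule.traceForm_apply_lie_apply]; simp
    rw [kE1] at k1
    rw [kE2] at k2
    have k1' : (a h).re * killingForm ℝ ↥g xh xh
        - (a h).im * killingForm ℝ ↥g yh xh = 0 := by
      simpa [map_sub, map_smul, smul_eq_mul] using k1
    have k2' : (a h).im * killingForm ℝ ↥g xh yh
        + (a h).re * killingForm ℝ ↥g yh yh = 0 := by
      simpa [map_add, map_smul, smul_eq_mul] using k2
    have hsymm : killingForm ℝ ↥g xh yh = killingForm ℝ ↥g yh xh :=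
      LieModule.traceForm_comm ℝ ↥g ↥g xh yh
    have hsum : (a h).re * (killingForm ℝ ↥g xh xh + killingForm ℝ ↥g yh yh) = 0 := by
      linear_combination k1' + k2' - (a h).im * hsymm
    have hxy : x ≠ 0 ∨ y ≠ 0 := by
      by_contra hcon
      push_neg at hcon
      exact hne (by simp [hcon.1, hcon.2])
    have hlt : killingForm ℝ ↥g xh xh + killingForm ℝ ↥g yh yh < 0 := by
      rcases hxy with h0 | h0
      · have hne' : xh ≠ 0 := by simp [hxh, Subtype.ext_iff, h0]
        have := hg.negdef xh hne'
        have h2 := killing_nonpos hg yh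
        linarith
      · have hne' : yh ≠ 0 := by simp [hyh, Subtype.ext_iff, h0]
        have := hg.negdef yh hne'
        have h2 := killing_nonpos hg xh
        linarith
    rcases mul_eq_zero.mp hsum with h0 | h0
    · exact h0
    · exact absurd h0 (ne_of_lt hlt)
  refine ⟨hre, ?_, ?_⟩
  · rw [E1, hre, neg_smul]; simp
  · rw [E2, hre]; simp

lemma build_reflection (hg : IsCompactForm gC g) (ht : IsMaxAbelian gC g t)
    {expAd : gC → (gC ≃ₗ⁅ℂ⁆ gC)} (hexp : IsExpAd gC expAd)
    {a : Module.Dual ℂ gC} (ha : IsRoot gC t a) :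
    ∃ (h2 : gC) (ν : gC ≃ₗ⁅ℂ⁆ gC), h2 ∈ cspan gC t ∧ a h2 = 2 ∧
      ν ∈ Inn gC expAd g ∧ ∀ H ∈ cspan gC t, ν H = H - a H • h2 := by
  classical
  obtain ⟨⟨H₁, hH₁, hH₁ne⟩, X, hXne, hXmem⟩ := ha
  obtain ⟨x, hx, y, hy, hXeq⟩ := hg.spans X
  rw [hXeq] at hXne hXmem
  have hcomp := root_components hg ht hx hy hXmem hXne
  have hex : ∃ h₁ ∈ t, a h₁ ≠ 0 := by
    by_contra hcon
    push_neg at hcon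
    exact hH₁ne (dual_vanish hcon hH₁)
  obtain ⟨h₁, hh₁t, hh₁ne⟩ := hex
  have hs₁ : (a h₁).im ≠ 0 := by
    intro h0
    exact hh₁ne (Complex.ext (by simpa using (hcomp h₁ hh₁t).1) (by simpa using h0))
  have hxne : x ≠ 0 := by
    intro h0
    have E := (hcomp h₁ hh₁t).2.1
    rw [h0, lie_zero] at E
    have hy0 : y = 0 := by
      rcases smul_eq_zero.mp E.symm with h1 | h1
      · exact absurd (neg_eq_zero.mp h1) hs₁
      · exact h1
    exact hXne (by rw [h0, hy0]; simp)
  have hyne : y ≠ 0 := by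
    intro h0
    have E := (hcomp h₁ hh₁t).2.2
    rw [h0, lie_zero] at E
    have hx0 : x = 0 := by
      rcases smul_eq_zero.mp E.symm with h1 | h1
      · exact absurd h1 hs₁
      · exact h1
    exact hXne (by rw [h0, hx0]; simp)
  -- the element v ∈ t
  set v : gC := (2 : ℝ) • ⁅y, x⁆ with hv
  have hvg : v ∈ g := g.smul_mem _ (g.lie_mem hy hx)
  have hvcomm : ∀ h ∈ t, ⁅h, v⁆ = (0 : gC) := by
    intro h hht
    have E1 := (hcomp h hht).2.1
    have E2 := (hcomp h hht).2.2
    have hleib : ⁅h, ⁅y, x⁆⁆ = ⁅⁅h, y⁆, x⁆ + ⁅y, ⁅h, x⁆⁆ := leibniz_lie h y x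
    rw [hv, lie_smul, hleib, E1, E2]
    simp [smul_lie, lie_smul, lie_self]
  have hvt : v ∈ t := by
    set tv : Submodule ℝ gC := t.toSubmodule ⊔ Submodule.span ℝ {v} with htv
    have hmemdec : ∀ z ∈ tv, ∃ z₁ ∈ t, ∃ rz : ℝ, z = z₁ + rz • v := by
      intro z hz
      rw [htv, Submodule.mem_sup] at hz
      obtain ⟨z₁, hz₁, z₂, hz₂, hzz⟩ := hz
      obtain ⟨rz, hrz⟩ := Submodule.mem_span_singleton.mp hz₂
      exact ⟨z₁, hz₁, rz, by rw [← hzz, ← hrz]⟩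
    have habel : ∀ z ∈ tv, ∀ w ∈ tv, ⁅z, w⁆ = (0 : gC) := by
      intro z hz w hw
      obtain ⟨z₁, hz₁, rz, rfl⟩ := hmemdec z hz
      obtain ⟨w₁, hw₁, rw', rfl⟩ := hmemdec w hw
      have c1 : ⁅z₁, w₁⁆ = (0 : gC) := ht.abelian _ hz₁ _ hw₁
      have c2 : ⁅z₁, v⁆ = (0 : gC) := hvcomm _ hz₁
      have c3 : ⁅v, w₁⁆ = (0 : gC) := by rw [← lie_skew, hvcomm _ hw₁, neg_zero]
      have c4 : ⁅v, v⁆ = (0 : gC) := lie_self v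
      simp [lie_add, add_lie, lie_smul, smul_lie, c1, c2, c3, c4]
    have hlie : ∀ {z w : gC}, z ∈ tv → w ∈ tv → ⁅z, w⁆ ∈ tv := by
      intro z w hz hw
      rw [habel z hz w hw]
      exact tv.zero_mem
    set t' : LieSubalgebra ℝ gC := { toSubmodule := tv, lie_mem' := hlie } with ht'
    have hmemt' : ∀ z : gC, z ∈ t' ↔ z ∈ tv := fun z => Iff.rfl
    have hle : t' ≤ g := by
      intro z hz
      obtain ⟨z₁, hz₁, rz, rfl⟩ := hmemdec z ((hmemt' z).mp hz)
      exact add_mem (ht.le hz₁) (g.smul_mem _ hvg)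
    have habel' : ∀ z ∈ t', ∀ w ∈ t', ⁅z, w⁆ = (0 : gC) :=
      fun z hz w hw => habel z ((hmemt' z).mp hz) w ((hmemt' w).mp hw)
    have hsub : t ≤ t' := by
      intro z hz
      exact (hmemt' z).mpr (Submodule.mem_sup_left hz)
    have heq := ht.max t' hle habel' hsub
    have hvt' : v ∈ t' :=
      (hmemt' v).mpr (Submodule.mem_sup_right (Submodule.mem_span_singleton_self v))
    rw [heq] at hvt'
    exact hvt'
  set r : ℝ := -(a v).im with hr
  -- Killing form computations
  set xh : ↥g := ⟨x, hx⟩ with hxh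
  set yh : ↥g := ⟨y, hy⟩ with hyh
  set vh : ↥g := ⟨v, hvg⟩ with hvh
  have hyh0 : yh ≠ 0 := by simp [hyh, Subtype.ext_iff, hyne]
  have hByy : killingForm ℝ ↥g yh yh < 0 := hg.negdef yh hyh0
  have hBform : ∀ h : gC, ∀ hht : h ∈ t,
      killingForm ℝ ↥g vh ⟨h, ht.le hht⟩ = 2 * (a h).im * killingForm ℝ ↥g yh yh := by
    intro h hht
    have E1 := (hcomp h hht).2.1
    have hv' : vh = (2 : ℝ) • ⁅yh, xh⁆ := Subtype.ext (by show v = (2 : ℝ) • ⁅y, x⁆; exact hv)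
    have hxb : ⁅xh, (⟨h, ht.le hht⟩ : ↥g)⁆ = (a h).im • yh := by
      apply Subtype.ext
      show ⁅x, h⁆ = (a h).im • y
      rw [← lie_skew, E1]
      simp
    rw [hv', map_smul, LinearMap.smul_apply, LieModule.traceForm_apply_lie_apply, hxb,
      map_smul, smul_eq_mul, smul_eq_mul]
    ring
  have hvne : v ≠ 0 := by
    intro h0
    have hB := hBform h₁ hh₁t
    have hvh0 : vh = 0 := by simp [hvh, Subtype.ext_iff, h0]
    rw [hvh0] at hB
    simp only [map_zero, LinearMap.zero_apply] at hB
    exact (mul_ne_zero (mul_ne_zero two_ne_zero hs₁) (ne_of_lt hByy)) hB.symm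
  have hvh0 : vh ≠ 0 := by simp [hvh, Subtype.ext_iff, hvne]
  have hBvv : killingForm ℝ ↥g vh vh < 0 := hg.negdef vh hvh0
  have hrneg : r < 0 := by
    have hB := hBform v hvt
    have him : (a v).im = -r := by rw [hr]; ring
    rw [him] at hB
    have heq : killingForm ℝ ↥g vh (⟨v, ht.le hvt⟩ : ↥g) = killingForm ℝ ↥g vh vh := rfl
    rw [heq] at hB
    nlinarith [hB, hByy, hBvv]
  have hrne : r ≠ 0 := ne_of_lt hrneg
  -- elements of gC
  set H0 : gC := Complex.I • v with hH0
  have hH0c : H0 ∈ cspan gC t := Submodule.smul_mem _ _ (mem_cspan hvt)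
  have havim : a v = ((a v).im : ℂ) * Complex.I :=
    Complex.ext (by simpa using (hcomp v hvt).1) (by simp)
  have haH0 : a H0 = (r : ℂ) := by
    rw [hH0, map_smul, smul_eq_mul, havim, hr]
    push_cast
    linear_combination ((a v).im : ℂ) * Complex.I_sq
  set U : gC := (-2 : ℝ) • y with hU
  have hUg : U ∈ g := g.smul_mem _ hy
  set W : gC := (2 : ℝ) • x with hW
  have Ev2 := (hcomp v hvt).2.2
  have him : (a v).im = -r := by rw [hr]; ring
  have hUH0 : ⁅U, H0⁆ = (-(r : ℂ) * Complex.I) • W := by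
    rw [hU, hH0, smul_lie, lie_smul]
    have hyv : ⁅y, v⁆ = -((a v).im • x) := by rw [← lie_skew, Ev2]
    rw [hyv, him, hW]
    match_scalars <;> (push_cast [Complex.coe_algebraMap]; ring1)
  have hUW : ⁅U, W⁆ = ((2 : ℂ) * Complex.I) • H0 := by
    rw [hU, hW, smul_lie, lie_smul, hH0, hv]
    match_scalars <;> (push_cast [Complex.coe_algebraMap]; first
      | ring1
      | linear_combination (4 : ℂ) * Complex.I_sq
      | linear_combination (-4 : ℂ) * Complex.I_sq)
  set μ : ℝ := Real.sqrt (-2 * r) with hμ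
  have hμpos : 0 < μ := Real.sqrt_pos.mpr (by linarith)
  have hμsq : μ ^ 2 = -2 * r := Real.sq_sqrt (by linarith)
  have hμsqC : ((μ : ℂ)) ^ 2 = -2 * (r : ℂ) := by
    have h := congrArg (fun s : ℝ => (s : ℂ)) hμsq
    push_cast at h
    exact h
  have hμC : (μ : ℂ) ≠ 0 := Complex.ofReal_ne_zero.mpr (ne_of_gt hμpos)
  set Ep : gC := (2 : ℂ) • H0 + (μ : ℂ) • W with hEp
  set Em : gC := (2 : ℂ) • H0 - (μ : ℂ) • W with hEm
  have hUEp : ⁅U, Ep⁆ = ((μ : ℂ) * Complex.I) • Ep := by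
    rw [hEp, lie_add, lie_smul, hUH0, lie_smul, hUW]
    match_scalars <;> (push_cast [Complex.coe_algebraMap]; first
      | ring1
      | linear_combination (2 * Complex.I) * hμsqC
      | linear_combination (-2 * Complex.I) * hμsqC
      | linear_combination Complex.I * hμsqC
      | linear_combination (-Complex.I) * hμsqC)
  have hUEm : ⁅U, Em⁆ = (-((μ : ℂ) * Complex.I)) • Em := by
    rw [hEm, lie_sub, lie_smul, hUH0, lie_smul, hUW]
    match_scalars <;> (push_cast [Complex.coe_algebraMap]; first
      | ring1
      | linear_combination (2 * Complex.I) * hμsqC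
      | linear_combination (-2 * Complex.I) * hμsqC
      | linear_combination Complex.I * hμsqC
      | linear_combination (-Complex.I) * hμsqC)
  set Z : gC := (Real.pi / μ) • U with hZ
  have hZg : Z ∈ g := g.smul_mem _ hUg
  have hZEp : ⁅Z, Ep⁆ = ((Real.pi : ℂ) * Complex.I) • Ep := by
    rw [hZ, smul_lie, hUEp, ← rsmul (Real.pi / μ), smul_smul]
    congr 1
    push_cast
    field_simp
  have hZEm : ⁅Z, Em⁆ = (-((Real.pi : ℂ) * Complex.I)) • Em := by
    rw [hZ, smul_lie, hUEm, ← rsmul (Real.pi / μ), smul_smul]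
    congr 1
    push_cast
    field_simp
  set ν : gC ≃ₗ⁅ℂ⁆ gC := expAd Z with hν
  have hνInn : ν ∈ Inn gC expAd g :=
    Subgroup.subset_closure ⟨Z, hZg, rfl⟩
  have hνEp : ν Ep = -Ep := by
    rw [hν, hexp.eig Z Ep _ hZEp, Complex.exp_pi_mul_I, neg_one_smul]
  have hνEm : ν Em = -Em := by
    rw [hν, hexp.eig Z Em _ hZEm, Complex.exp_neg, Complex.exp_pi_mul_I, inv_neg, inv_one,
      neg_one_smul]
  have hνH0 : ν H0 = -H0 := by
    have hsum : H0 = (4 : ℂ)⁻¹ • (Ep + Em) := by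
      rw [hEp, hEm]
      match_scalars <;> ring
    rw [hsum, eqv_smul, eqv_add, hνEp, hνEm]
    match_scalars <;> ring
  have hfix : ∀ H, H ∈ cspan gC t → a H = 0 → ν H = H := by
    intro H hH ha0
    have hXr : ⁅H, x + Complex.I • y⁆ = 0 := by
      rw [hXmem H hH, ha0, zero_smul]
    have hYmem : x - Complex.I • y ∈ rootSpace gC t (-a) := by
      apply mem_rootSpace_of_t
      intro h hht
      have E1 := (hcomp h hht).2.1
      have E2 := (hcomp h hht).2.2
      have hre := (hcomp h hht).1
      have hah : a h = ((a h).im : ℂ) * Complex.I :=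
        Complex.ext (by simpa using hre) (by simp)
      rw [lie_sub, lie_smul, E1, E2, LinearMap.neg_apply]
      conv_rhs => rw [hah]
      match_scalars <;> (push_cast [Complex.coe_algebraMap]; first
        | ring1
        | linear_combination ((a h).im : ℂ) * Complex.I_sq
        | linear_combination (-(a h).im : ℂ) * Complex.I_sq)
    have hYr : ⁅H, x - Complex.I • y⁆ = 0 := by
      rw [hYmem H hH, LinearMap.neg_apply, ha0, neg_zero, zero_smul]
    have hHy : ⁅H, y⁆ = 0 := by
      have hd : ⁅H, (x + Complex.I • y) - (x - Complex.I • y)⁆ = 0 := by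
        rw [lie_sub, hXr, hYr, sub_zero]
      have h2 : (x + Complex.I • y) - (x - Complex.I • y) = ((2 : ℂ) * Complex.I) • y := by
        match_scalars <;> ring
      rw [h2, lie_smul] at hd
      rcases smul_eq_zero.mp hd with h0 | h0
      · exact absurd h0 (by simp [Complex.I_ne_zero])
      · exact h0
    have hZH : ⁅Z, H⁆ = (0 : ℂ) • H := by
      rw [zero_smul, hZ, hU, smul_lie, smul_lie]
      have hyH : ⁅y, H⁆ = (0 : gC) := by
        rw [← lie_skew, hHy, neg_zero]
      rw [hyH, smul_zero, smul_zero]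
    rw [hν, hexp.eig Z H 0 hZH, Complex.exp_zero, one_smul]
  have hrC : (r : ℂ) ≠ 0 := Complex.ofReal_ne_zero.mpr hrne
  refine ⟨((2 / r : ℝ) : ℂ) • H0, ν, Submodule.smul_mem _ _ hH0c, ?_, hνInn, ?_⟩
  · rw [map_smul, haH0, smul_eq_mul]
    push_cast
    field_simp
  · intro H hH
    have hH'c : H - (a H / (r : ℂ)) • H0 ∈ cspan gC t :=
      Submodule.sub_mem _ hH (Submodule.smul_mem _ _ hH0c)
    have ha0 : a (H - (a H / (r : ℂ)) • H0) = 0 := by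
      rw [map_sub, map_smul, haH0, smul_eq_mul]
      field_simp
      ring
    have hsplit : H = (H - (a H / (r : ℂ)) • H0) + (a H / (r : ℂ)) • H0 := by abel
    calc ν H = ν ((H - (a H / (r : ℂ)) • H0) + (a H / (r : ℂ)) • H0) := by rw [← hsplit]
      _ = ν (H - (a H / (r : ℂ)) • H0) + (a H / (r : ℂ)) • ν H0 := by
          rw [eqv_add, eqv_smul]
      _ = (H - (a H / (r : ℂ)) • H0) + (a H / (r : ℂ)) • (-H0) := by
          rw [hfix _ hH'c ha0, hνH0]
      _ = H - a H • (((2 / r : ℝ) : ℂ) • H0) := by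
          have hcast : ((2 / r : ℝ) : ℂ) = 2 / (r : ℂ) := by push_cast; ring
          rw [hcast]
          match_scalars <;> (field_simp; try ring)

lemma reflection_symm {a : Module.Dual ℂ gC} {h2 : gC} {ν : gC ≃ₗ⁅ℂ⁆ gC}
    (hh2 : h2 ∈ cspan gC t) (ha2 : a h2 = 2)
    (hf : ∀ H ∈ cspan gC t, ν H = H - a H • h2) :
    ∀ H ∈ cspan gC t, ν.symm H = H - a H • h2 := by
  intro H hH
  have hσc : H - a H • h2 ∈ cspan gC t :=
    Submodule.sub_mem _ hH (Submodule.smul_mem _ _ hh2)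
  have hfwd : ν (H - a H • h2) = H := by
    rw [hf _ hσc, map_sub, map_smul, ha2, smul_eq_mul]
    match_scalars <;> ring
  have h3 := congrArg ν.symm hfwd
  rw [ν.symm_apply_apply] at h3
  exact h3.symm

lemma transport {a b : Module.Dual ℂ gC} {h2 : gC} {ν : gC ≃ₗ⁅ℂ⁆ gC}
    (hh2 : h2 ∈ cspan gC t) (ha2 : a h2 = 2)
    (hf : ∀ H ∈ cspan gC t, ν H = H - a H • h2)
    (hb : IsRoot gC t b) : IsRoot gC t (b - b h2 • a) := by
  have hfs := reflection_symm hh2 ha2 hf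
  obtain ⟨⟨H₁, hH₁, hH₁ne⟩, X, hXne, hX⟩ := hb
  have hvalsym : ∀ H ∈ cspan gC t, (b - b h2 • a) H = b (H - a H • h2) := by
    intro H hH
    simp only [LinearMap.sub_apply, LinearMap.smul_apply, map_sub, map_smul, smul_eq_mul]
    ring
  constructor
  · have hc : ν H₁ ∈ cspan gC t := by
      rw [hf _ hH₁]
      exact Submodule.sub_mem _ hH₁ (Submodule.smul_mem _ _ hh2)
    refine ⟨ν H₁, hc, ?_⟩
    rw [hvalsym (ν H₁) hc]
    have hback : ν H₁ - a (ν H₁) • h2 = ν.symm (ν H₁) := (hfs (ν H₁) hc).symm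
    rw [hback, ν.symm_apply_apply]
    exact hH₁ne
  · refine ⟨ν X, eqv_ne_zero ν hXne, ?_⟩
    intro H hH
    have hsymval := hfs H hH
    have hsymc : ν.symm H ∈ cspan gC t := by
      rw [hsymval]
      exact Submodule.sub_mem _ hH (Submodule.smul_mem _ _ hh2)
    calc ⁅H, ν X⁆ = ⁅ν (ν.symm H), ν X⁆ := by rw [ν.apply_symm_apply]
      _ = ν ⁅ν.symm H, X⁆ := by rw [LieEquiv.map_lie]
      _ = ν (b (ν.symm H) • X) := by rw [hX _ hsymc]
      _ = b (ν.symm H) • ν X := eqv_smul ν _ X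
      _ = ((b - b h2 • a) H) • ν X := by
          rw [hsymval, hvalsym H hH]

lemma coord_zero [LieAlgebra.IsSimple ℂ gC] (ht : IsMaxAbelian gC g t)
    (hspan : SpansByRoots gC t) {n : ℕ} {α : ℕ → Module.Dual ℂ gC} {K : ℕ → gC}
    (hsys : IsSimpleSystem gC t n α K) {H : gC} (hH : H ∈ cspan gC t)
    (h0 : ∀ p ∈ Finset.Icc 1 n, α p H = 0) : H = 0 := by
  have hroot0 : ∀ b : Module.Dual ℂ gC, IsRoot gC t b → b H = 0 := by
    intro b hb
    rcases hsys.decomp b hb with ⟨k, hk⟩ | ⟨k, hk⟩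
    · rw [hk H hH]
      exact Finset.sum_eq_zero (fun j hj => by rw [h0 j hj, mul_zero])
    · rw [hk H hH, neg_eq_zero]
      exact Finset.sum_eq_zero (fun j hj => by rw [h0 j hj, mul_zero])
  have hcen : ∀ z : gC, ⁅H, z⁆ = 0 := by
    have hle : Submodule.span ℂ ((cspan gC t : Set gC) ∪
        {X : gC | ∃ b : Module.Dual ℂ gC, IsRoot gC t b ∧ X ∈ rootSpace gC t b}) ≤
        LinearMap.ker (LieAlgebra.ad ℂ gC H) := by
      rw [Submodule.span_le]
      intro z hz
      rcases hz with hz | hz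
      · simp [LinearMap.mem_ker, LieAlgebra.ad_apply, cspan_abelian ht H hH z hz]
      · obtain ⟨b, hb, hzb⟩ := hz
        simp [LinearMap.mem_ker, LieAlgebra.ad_apply, hzb H hH, hroot0 b hb]
    intro z
    have hz : z ∈ Submodule.span ℂ ((cspan gC t : Set gC) ∪
        {X : gC | ∃ b : Module.Dual ℂ gC, IsRoot gC t b ∧ X ∈ rootSpace gC t b}) := by
      rw [hspan]; exact Submodule.mem_top
    simpa [LieAlgebra.ad_apply] using hle hz
  have hmem : H ∈ LieAlgebra.center ℂ gC := by
    rw [LieModule.mem_maxTrivSubmodule]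
    intro z
    rw [← lie_skew, hcen z, neg_zero]
  rcases LieAlgebra.IsSimple.eq_bot_or_eq_top (LieAlgebra.center ℂ gC) with hc | hc
  · rw [hc] at hmem
    simpa using hmem
  · exact absurd ((LieAlgebra.isLieAbelian_iff_center_eq_top ℂ gC).mpr hc)
      (LieAlgebra.IsSimple.non_abelian ℂ (L := gC))

lemma nat_cast_ne_neg_one (k : ℕ) : (k : ℂ) ≠ -1 := by
  intro h
  have h' : (k : ℝ) = -1 := by exact_mod_cast h
  have h2 := Nat.cast_nonneg (α := ℝ) k
  linarith

lemma sum_eval {n : ℕ} {α : ℕ → Module.Dual ℂ gC} {K : ℕ → gC}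
    (hsys : IsSimpleSystem gC t n α K) (k : ℕ → ℕ) {p : ℕ} (hp : p ∈ Finset.Icc 1 n) :
    ∑ j ∈ Finset.Icc 1 n, (k j : ℂ) * α j (K p) = (k p : ℂ) := by
  rw [Finset.sum_eq_single_of_mem p hp]
  · rw [hsys.K_dual p hp p hp, if_pos rfl, mul_one]
  · intro j hj hne
    rw [hsys.K_dual j hj p hp, if_neg hne, mul_zero]

/-- The coordinate vector of a subset. -/
def cvec' (S : Finset ℕ) (p : ℕ) : ℂ :=
  (if p ∈ S then 1 else 0) - (if p + 1 ∈ S then 1 else 0)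

lemma cvec'_source {n i p : ℕ} (hp : p ∈ Finset.Icc 1 n) (hi : i ∈ Finset.Icc 1 n) :
    cvec' (Finset.Icc 1 i) p = if p = i then 1 else 0 := by
  rw [Finset.mem_Icc] at hp hi
  unfold cvec'
  simp only [Finset.mem_Icc]
  split_ifs <;> first | (exfalso; omega) | norm_num

lemma cvec'_target {n i p : ℕ} (hp : p ∈ Finset.Icc 1 n) (hi : i ∈ Finset.Icc 1 n) :
    cvec' (Finset.Icc (n + 2 - i) (n + 1)) p = -(if p = n + 1 - i then 1 else 0) := by
  rw [Finset.mem_Icc] at hp hi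
  unfold cvec'
  simp only [Finset.mem_Icc]
  split_ifs <;> first | (exfalso; omega) | norm_num

lemma cvec'_swap (S : Finset ℕ) (q : ℕ) (hq : q ∉ S) (hq1 : q + 1 ∈ S) (p : ℕ) :
    cvec' (insert q (S.erase (q + 1))) p
      = cvec' S p - cvec' S q * (if p = q then 2 else if q = p + 1 ∨ p = q + 1 then -1 else 0) := by
  classical
  have hf : ∀ j : ℕ, (if j ∈ insert q (S.erase (q + 1)) then (1 : ℂ) else 0)
      = (if j ∈ S then (1 : ℂ) else 0) + (if j = q then 1 else 0)
        - (if j = q + 1 then 1 else 0) := by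
    intro j
    by_cases hjq : j = q
    · subst hjq
      have hne : j ≠ j + 1 := by omega
      simp [hq, hne]
    · by_cases hjq1 : j = q + 1
      · subst hjq1
        have hne : q + 1 ≠ q := by omega
        simp [hq1, hne, Finset.mem_insert, Finset.mem_erase]
      · have hmem : (j ∈ insert q (S.erase (q + 1))) ↔ j ∈ S := by
          simp [Finset.mem_insert, Finset.mem_erase, hjq, hjq1]
        rw [if_congr hmem rfl rfl, if_neg hjq, if_neg hjq1]
        ring
  unfold cvec'
  rw [hf p, hf (p + 1), if_neg hq, if_pos hq1]
  have hpq1 : (p + 1 = q + 1) ↔ p = q := by omega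
  rw [if_congr hpq1 rfl rfl]
  generalize (if p ∈ S then (1 : ℂ) else 0) = A
  generalize (if p + 1 ∈ S then (1 : ℂ) else 0) = B
  split_ifs <;> first | ring1 | (exfalso; omega)

end Aux

/-- Lemma 2.3, case `A_n`.  Let `g` be a compact simple Lie algebra of type
`A_n` (characterized by: all coefficients of the highest root equal `1`, and consecutive
simple roots — and only those — are adjacent, i.e. have a root as their sum), `t` a maximal
abelian subalgebra, `Π = {α 1, …, α n}` the fundamental roots and `K j ∈ t_ℂ` the dual basis
(`α i (K j) = δ_{ij}`).  Then for every `1 ≤ i ≤ n` the inner automorphism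
`τ_{K i} = Ad(exp π √-1 K i)` is conjugate within `Int(g)` to `τ_{K (n+1-i)}`. -/
theorem stmt_1
    (gC : Type) [LieRing gC] [LieAlgebra ℂ gC] [LieAlgebra ℝ gC]
    [IsScalarTower ℝ ℂ gC] [FiniteDimensional ℂ gC]
    [LieAlgebra.IsSimple ℂ gC]
    (g t : LieSubalgebra ℝ gC)
    (hg : IsCompactForm gC g) (ht : IsMaxAbelian gC g t)
    (expAd : gC → (gC ≃ₗ⁅ℂ⁆ gC)) (hexp : IsExpAd gC expAd)
    (hspan : SpansByRoots gC t)
    (n : ℕ) (α : ℕ → Module.Dual ℂ gC) (K : ℕ → gC)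
    (hsys : IsSimpleSystem gC t n α K)
    (δ : Module.Dual ℂ gC) (m : ℕ → ℕ) (hδ : IsHighestRoot gC t n α δ m)
    -- type `A_n`: all coefficients of the highest root are `1` …
    (hAn : ∀ j ∈ Finset.Icc 1 n, m j = 1)
    -- … and the simple roots are labeled along the Dynkin diagram of type `A_n`
    (hadj : ∀ p ∈ Finset.Icc 1 n, ∀ q ∈ Finset.Icc 1 n, p ≠ q →
      (IsRoot gC t (α p + α q) ↔ (q = p + 1 ∨ p = q + 1)))
    (i : ℕ) (hi : i ∈ Finset.Icc 1 n) :
    ∃ ν ∈ Inn gC expAd g,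
      ν * tau gC expAd (K i) * ν⁻¹ = tau gC expAd (K (n + 1 - i)) := by
  classical
  have hii := Finset.mem_Icc.mp hi
  have hi' : n + 1 - i ∈ Finset.Icc 1 n := by rw [Finset.mem_Icc]; omega
  -- reflections at each simple root
  have hrefl : ∀ q : ℕ, ∃ (h2 : gC) (ν : gC ≃ₗ⁅ℂ⁆ gC), q ∈ Finset.Icc 1 n →
      (h2 ∈ cspan gC t ∧ α q h2 = 2 ∧ ν ∈ Inn gC expAd g ∧
        ∀ H ∈ cspan gC t, ν H = H - α q H • h2) := by
    intro q
    by_cases hq : q ∈ Finset.Icc 1 n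
    · obtain ⟨h2, ν, ha, hb, hc, hd⟩ := build_reflection hg ht hexp (hsys.isRoot q hq)
      exact ⟨h2, ν, fun _ => ⟨ha, hb, hc, hd⟩⟩
    · exact ⟨0, 1, fun h => absurd h hq⟩
  choose hcor νs hprop using hrefl
  -- the Cartan integers
  have hAfull : ∀ p ∈ Finset.Icc 1 n, ∀ q ∈ Finset.Icc 1 n,
      α p (hcor q) = if p = q then 2 else if q = p + 1 ∨ p = q + 1 then -1 else 0 := by
    intro p hp q hq
    by_cases hpq : p = q
    · rw [if_pos hpq, hpq]
      exact (hprop q hq).2.1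
    · rw [if_neg hpq]
      obtain ⟨hqc, hq2, _, hqf⟩ := hprop q hq
      have hb' : IsRoot gC t (α p - α p (hcor q) • α q) :=
        transport hqc hq2 hqf (hsys.isRoot p hp)
      have heval : ∀ (β : Module.Dual ℂ gC) (c : ℂ) (l : ℕ), l ∈ Finset.Icc 1 n →
          (β - c • α q) (K l) = β (K l) - c * (if q = l then 1 else 0) := by
        intro β c l hl
        simp only [LinearMap.sub_apply, LinearMap.smul_apply, smul_eq_mul,
          hsys.K_dual q hq l hl]
      have hqnp : ¬(q = p) := fun h => hpq h.symm
      rcases hsys.decomp _ hb' with ⟨k, hk⟩ | ⟨k, hk⟩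
      on_goal 2 =>
        exfalso
        have h1 := hk (K p) (hsys.K_mem p hp)
        rw [heval _ _ p hp, hsys.K_dual p hp p hp, if_pos rfl, if_neg hqnp, mul_zero,
          sub_zero, sum_eval hsys k hp] at h1
        exact nat_cast_ne_neg_one (k p) (by linear_combination h1)
      have h1 := hk (K q) (hsys.K_mem q hq)
      rw [heval _ _ q hq, if_pos rfl, mul_one, hsys.K_dual p hp q hq, if_neg hpq,
        sum_eval hsys k hq] at h1
      have hcval : α p (hcor q) = -(k q : ℂ) := by linear_combination -h1
      have hkle : k q ≤ 1 := by
        have hle := hδ.highest _ k hb' hk q hq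
        rwa [hAn q hq] at hle
      by_cases hadjc : q = p + 1 ∨ p = q + 1
      · rw [if_pos hadjc]
        rcases Nat.le_one_iff_eq_zero_or_eq_one.mp hkle with h0 | h1'
        · exfalso
          have hcc : α p (hcor q) = 0 := by rw [hcval, h0]; simp
          have hro : IsRoot gC t (α p + α q) := (hadj p hp q hq hpq).mpr hadjc
          have hb'' := transport hqc hq2 hqf hro
          have h2sum : (α p + α q) (hcor q) = 2 := by
            rw [LinearMap.add_apply, hcc, hq2, zero_add]
          rcases hsys.decomp _ hb'' with ⟨k2, hk2⟩ | ⟨k2, hk2⟩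
          · have h3 := hk2 (K q) (hsys.K_mem q hq)
            rw [heval _ _ q hq, if_pos rfl, mul_one, h2sum, LinearMap.add_apply,
              hsys.K_dual p hp q hq, if_neg hpq, hsys.K_dual q hq q hq, if_pos rfl,
              sum_eval hsys k2 hq] at h3
            exact nat_cast_ne_neg_one (k2 q) (by linear_combination -h3)
          · have h3 := hk2 (K p) (hsys.K_mem p hp)
            rw [heval _ _ p hp, if_neg hqnp, mul_zero, sub_zero, LinearMap.add_apply,
              hsys.K_dual p hp p hp, if_pos rfl, hsys.K_dual q hq p hp, if_neg hqnp,
              sum_eval hsys k2 hp] at h3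
            exact nat_cast_ne_neg_one (k2 p) (by linear_combination h3)
        · rw [hcval, h1']; norm_num
      · rw [if_neg hadjc]
        rcases Nat.le_one_iff_eq_zero_or_eq_one.mp hkle with h0 | h1'
        · rw [hcval, h0]; simp
        · exfalso
          have hcc : α p (hcor q) = -1 := by rw [hcval, h1']; norm_num
          have hfun : α p - α p (hcor q) • α q = α p + α q := by
            rw [hcc, neg_smul, one_smul, sub_neg_eq_add]
          rw [hfun] at hb'
          exact hadjc ((hadj p hp q hq hpq).mp hb')
  -- uniqueness of coordinates
  have huniq : ∀ H H' : gC, H ∈ cspan gC t → H' ∈ cspan gC t →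
      (∀ p ∈ Finset.Icc 1 n, α p H = α p H') → H = H' := by
    intro H H' h1 h2 h3
    have hz := coord_zero ht hspan hsys (Submodule.sub_mem _ h1 h2)
      (fun p hp => by rw [map_sub, h3 p hp, sub_self])
    exact sub_eq_zero.mp hz
  -- the walk through the Weyl group
  have hwalk : ∀ N : ℕ, ∀ S : Finset ℕ, S.sum id ≤ N →
      (∀ j ∈ S, j ∈ Finset.Icc 1 (n + 1)) →
      ∀ H : gC, H ∈ cspan gC t → (∀ p ∈ Finset.Icc 1 n, α p H = cvec' S p) →
      ∃ ν ∈ Inn gC expAd g, ν H ∈ cspan gC t ∧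
        ∀ p ∈ Finset.Icc 1 n, α p (ν H) = cvec' (Finset.Icc 1 S.card) p := by
    intro N
    induction N with
    | zero =>
      intro S hsum hsub H hc hcoord
      have hS : S = ∅ := by
        rw [Finset.eq_empty_iff_forall_notMem]
        intro j hj
        have h1 := Finset.mem_Icc.mp (hsub j hj)
        have h2 : j ≤ S.sum id := by
          simpa only [id_eq] using
            Finset.single_le_sum (f := id) (fun _ _ => Nat.zero_le _) hj
        omega
      subst hS
      refine ⟨1, Subgroup.one_mem _, hc, ?_⟩
      intro p hp
      have h1 : (1 : gC ≃ₗ⁅ℂ⁆ gC) H = H := rfl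
      rw [h1]
      simpa using hcoord p hp
    | succ N ih =>
      intro S hsum hsub H hc hcoord
      by_cases hcanon : ∀ j ∈ S, 2 ≤ j → j - 1 ∈ S
      · have hS : S = Finset.Icc 1 S.card := by
          rcases Finset.eq_empty_or_nonempty S with he | hne
          · subst he; simp
          · have hdown : ∀ d : ℕ, ∀ j ∈ S, 1 ≤ j - d → j - d ∈ S := by
              intro d
              induction d with
              | zero => intro j hj _; simpa using hj
              | succ d ihd =>
                intro j hj hge
                have h1 : j - d ∈ S := ihd j hj (by omega)
                have h2 : 2 ≤ j - d := by omega
                have h3 := hcanon _ h1 h2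
                rwa [show j - d - 1 = j - (d + 1) by omega] at h3
            have hSM : S = Finset.Icc 1 (S.max' hne) := by
              apply Finset.ext
              intro j
              rw [Finset.mem_Icc]
              constructor
              · intro hj
                have h1 := Finset.mem_Icc.mp (hsub j hj)
                exact ⟨h1.1, Finset.le_max' S j hj⟩
              · rintro ⟨hj1, hj2⟩
                have hMS : S.max' hne ∈ S := S.max'_mem hne
                have h4 := hdown (S.max' hne - j) _ hMS (by omega)
                rwa [show S.max' hne - (S.max' hne - j) = j by omega] at h4
            have hMc : (Finset.Icc 1 (S.max' hne)).card = S.max' hne := by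
              rw [Nat.card_Icc]
              omega
            rw [hSM, hMc]
        refine ⟨1, Subgroup.one_mem _, hc, ?_⟩
        intro p hp
        have h1 : (1 : gC ≃ₗ⁅ℂ⁆ gC) H = H := rfl
        rw [h1, ← hS]
        exact hcoord p hp
      · push_neg at hcanon
        obtain ⟨j, hjS, hj2, hj1S⟩ := hcanon
        have hjIcc := Finset.mem_Icc.mp (hsub j hjS)
        have hqIcc : j - 1 ∈ Finset.Icc 1 n := by rw [Finset.mem_Icc]; omega
        have hq1 : j - 1 + 1 = j := by omega
        have hq1S : j - 1 + 1 ∈ S := by rw [hq1]; exact hjS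
        obtain ⟨hqc, hq2, hqInn, hqf⟩ := hprop (j - 1) hqIcc
        have hc' : νs (j - 1) H ∈ cspan gC t := by
          rw [hqf H hc]
          exact Submodule.sub_mem _ hc (Submodule.smul_mem _ _ hqc)
        have hcoord' : ∀ p ∈ Finset.Icc 1 n,
            α p (νs (j - 1) H) = cvec' (insert (j - 1) (S.erase (j - 1 + 1))) p := by
          intro p hp
          rw [hqf H hc, map_sub, map_smul, smul_eq_mul]
          rw [hcoord p hp, hcoord (j - 1) hqIcc, hAfull p hp (j - 1) hqIcc]
          rw [cvec'_swap S (j - 1) hj1S hq1S p]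
        have hsub' : ∀ l ∈ insert (j - 1) (S.erase (j - 1 + 1)), l ∈ Finset.Icc 1 (n + 1) := by
          intro l hl
          rcases Finset.mem_insert.mp hl with rfl | hl
          · rw [Finset.mem_Icc]; omega
          · exact hsub l (Finset.mem_of_mem_erase hl)
        have hsum' : (insert (j - 1) (S.erase (j - 1 + 1))).sum id ≤ N := by
          have h1 : (S.erase (j - 1 + 1)).sum id + id (j - 1 + 1) = S.sum id :=
            Finset.sum_erase_add S id hq1S
          have hnm : j - 1 ∉ S.erase (j - 1 + 1) :=
            fun h => hj1S (Finset.mem_of_mem_erase h)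
          have h2 : (insert (j - 1) (S.erase (j - 1 + 1))).sum id
              = id (j - 1) + (S.erase (j - 1 + 1)).sum id :=
            Finset.sum_insert hnm
          simp only [id_eq] at h1 h2 hsum ⊢
          omega
        have hcard' : (insert (j - 1) (S.erase (j - 1 + 1))).card = S.card := by
          have hnm : j - 1 ∉ S.erase (j - 1 + 1) :=
            fun h => hj1S (Finset.mem_of_mem_erase h)
          rw [Finset.card_insert_of_notMem hnm, Finset.card_erase_of_mem hq1S]
          have h1 : 1 ≤ S.card := Finset.card_pos.mpr ⟨j - 1 + 1, hq1S⟩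
          omega
        obtain ⟨ν', hν'Inn, hν'c, hν'coord⟩ :=
          ih (insert (j - 1) (S.erase (j - 1 + 1))) hsum' hsub' (νs (j - 1) H) hc' hcoord'
        refine ⟨ν' * νs (j - 1), mul_mem hν'Inn hqInn, ?_, ?_⟩
        · have hmul : (ν' * νs (j - 1)) H = ν' (νs (j - 1) H) := rfl
          rw [hmul]; exact hν'c
        · intro p hp
          have hmul : (ν' * νs (j - 1)) H = ν' (νs (j - 1) H) := rfl
          rw [hmul, hν'coord p hp, hcard']
  -- run the walk from both ends
  have hsrc : ∀ p ∈ Finset.Icc 1 n, α p (K i) = cvec' (Finset.Icc 1 i) p := by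
    intro p hp
    rw [hsys.K_dual p hp i hi, cvec'_source hp hi]
  have hsrcsub : ∀ l ∈ Finset.Icc 1 i, l ∈ Finset.Icc 1 (n + 1) := by
    intro l hl
    rw [Finset.mem_Icc] at hl ⊢
    omega
  obtain ⟨ν₁, hν₁Inn, hν₁c, hν₁coord⟩ := hwalk ((Finset.Icc 1 i).sum id) _ le_rfl hsrcsub
    (K i) (hsys.K_mem i hi) hsrc
  have htgt : ∀ p ∈ Finset.Icc 1 n,
      α p (-(K (n + 1 - i))) = cvec' (Finset.Icc (n + 2 - i) (n + 1)) p := by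
    intro p hp
    rw [map_neg, hsys.K_dual p hp (n + 1 - i) hi', cvec'_target hp hi]
  have htgtsub : ∀ l ∈ Finset.Icc (n + 2 - i) (n + 1), l ∈ Finset.Icc 1 (n + 1) := by
    intro l hl
    rw [Finset.mem_Icc] at hl ⊢
    omega
  obtain ⟨ν₂, hν₂Inn, hν₂c, hν₂coord⟩ := hwalk ((Finset.Icc (n + 2 - i) (n + 1)).sum id) _
    le_rfl htgtsub (-(K (n + 1 - i))) (Submodule.neg_mem _ (hsys.K_mem _ hi')) htgt
  have hcards : (Finset.Icc (n + 2 - i) (n + 1)).card = (Finset.Icc 1 i).card := by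
    rw [Nat.card_Icc, Nat.card_Icc]
    omega
  have hmatch : ν₁ (K i) = ν₂ (-(K (n + 1 - i))) := by
    apply huniq _ _ hν₁c hν₂c
    intro p hp
    rw [hν₁coord p hp, hν₂coord p hp, hcards]
  refine ⟨ν₂⁻¹ * ν₁, mul_mem (inv_mem hν₂Inn) hν₁Inn, ?_⟩
  have hνKi : (ν₂⁻¹ * ν₁) (K i) = -(K (n + 1 - i)) := by
    have h1 : (ν₂⁻¹ * ν₁) (K i) = ν₂.symm (ν₁ (K i)) := rfl
    rw [h1, hmatch, ν₂.symm_apply_apply]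
  -- expAd identities
  have hexp0 : expAd (0 : gC) = 1 := by
    have h := hexp.add 0 0 (by simp)
    rw [add_zero] at h
    have h2 : expAd (0 : gC) * expAd 0 = expAd 0 * 1 := h.symm.trans (by ext z; rfl)
    exact mul_left_cancel h2
  have hneg : ∀ Xv : gC, expAd (-Xv) = (expAd Xv)⁻¹ := by
    intro Xv
    have h := hexp.add Xv (-Xv) (by simp)
    rw [add_neg_cancel, hexp0] at h
    exact eq_inv_of_mul_eq_one_right h.symm
  have hfixall : expAd ((2 * (Real.pi : ℂ) * Complex.I) • K (n + 1 - i)) = 1 := by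
    ext z
    show expAd ((2 * (Real.pi : ℂ) * Complex.I) • K (n + 1 - i)) z = z
    have hz : z ∈ Submodule.span ℂ ((cspan gC t : Set gC) ∪
        {X : gC | ∃ b : Module.Dual ℂ gC, IsRoot gC t b ∧ X ∈ rootSpace gC t b}) := by
      rw [hspan]; exact Submodule.mem_top
    induction hz using Submodule.span_induction with
    | mem w hw =>
      rcases hw with hw | hw
      · have hl : ⁅(2 * (Real.pi : ℂ) * Complex.I) • K (n + 1 - i), w⁆ = (0 : ℂ) • w := by
          rw [zero_smul, smul_lie,
            cspan_abelian ht (K (n + 1 - i)) (hsys.K_mem _ hi') w hw, smul_zero]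
        rw [hexp.eig _ _ _ hl, Complex.exp_zero, one_smul]
      · obtain ⟨b, hb, hwb⟩ := hw
        have hl : ⁅(2 * (Real.pi : ℂ) * Complex.I) • K (n + 1 - i), w⁆
            = ((2 * (Real.pi : ℂ) * Complex.I) * b (K (n + 1 - i))) • w := by
          rw [smul_lie, hwb _ (hsys.K_mem _ hi'), smul_smul]
        rw [hexp.eig _ _ _ hl]
        have hint : ∃ m : ℤ, b (K (n + 1 - i)) = (m : ℂ) := by
          rcases hsys.decomp b hb with ⟨k, hk⟩ | ⟨k, hk⟩
          · refine ⟨(k (n + 1 - i) : ℤ), ?_⟩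
            rw [hk _ (hsys.K_mem _ hi'), sum_eval hsys k hi']
            push_cast
            ring
          · refine ⟨-(k (n + 1 - i) : ℤ), ?_⟩
            rw [hk _ (hsys.K_mem _ hi'), sum_eval hsys k hi']
            push_cast
            ring
        obtain ⟨m, hm⟩ := hint
        rw [hm, show (2 * (Real.pi : ℂ) * Complex.I) * (m : ℂ)
            = (m : ℂ) * (2 * (Real.pi : ℂ) * Complex.I) by ring,
          Complex.exp_int_mul_two_pi_mul_I, one_smul]
    | zero => exact eqv_zero _
    | add u w hu hw ihu ihw => rw [eqv_add, ihu, ihw]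
    | smul c u hu ihu => rw [eqv_smul, ihu]
  have hsq : expAd (((Real.pi : ℂ) * Complex.I) • K (n + 1 - i))
      * expAd (((Real.pi : ℂ) * Complex.I) • K (n + 1 - i)) = 1 := by
    have h := hexp.add (((Real.pi : ℂ) * Complex.I) • K (n + 1 - i))
      (((Real.pi : ℂ) * Complex.I) • K (n + 1 - i))
      (by rw [lie_smul, smul_lie, lie_self, smul_zero, smul_zero])
    rw [show (((Real.pi : ℂ) * Complex.I) • K (n + 1 - i))
        + (((Real.pi : ℂ) * Complex.I) • K (n + 1 - i))
        = (2 * (Real.pi : ℂ) * Complex.I) • K (n + 1 - i) by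
      rw [← add_smul]; congr 1; ring, hfixall] at h
    exact h.symm
  have hτ : expAd (-(((Real.pi : ℂ) * Complex.I) • K (n + 1 - i)))
      = tau gC expAd (K (n + 1 - i)) := by
    rw [hneg]
    exact inv_eq_of_mul_eq_one_right hsq
  show (ν₂⁻¹ * ν₁) * expAd (((Real.pi : ℂ) * Complex.I) • K i) * (ν₂⁻¹ * ν₁)⁻¹
      = tau gC expAd (K (n + 1 - i))
  rw [hexp.conj (ν₂⁻¹ * ν₁) (((Real.pi : ℂ) * Complex.I) • K i)]
  rw [eqv_smul, hνKi, smul_neg]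
  exact hτ


end Paper
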